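/- Let L > 0 and f ∈ F_{0,L}(ℝ^d) be smooth convex with global minimum f_*. Run N gradient steps x_{i+1} = x_i - (h_i/L)∇f(x_i) with h_i ∈ (0, 3/2]. Then ‖∇f(x_N)‖² ≤ L(f(x₀) - f_*)/(1/2 + ∑_{i=0}^{N-1} h_i). -/

import Mathlib

open InnerProductSpace Set
local notation "⟪" x ", " y "⟫" => @inner ℝ _ _ x y

variable {E : Type*} [NormedAddCommGroup E] [InnerProductSpace ℝ E] [CompleteSpace E]

-- curve derivative
lemma curve_deriv (f : E → ℝ) (hdiff : Differentiable ℝ f) (x v : E) (t : ℝ) :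
    HasDerivAt (fun s : ℝ => f (x + s • v)) ⟪gradient f (x + t • v), v⟫ t := by
  have hc : HasDerivAt (fun s : ℝ => x + s • v) v t := by
    simpa using ((hasDerivAt_id t).smul_const v).const_add x
  have hg : HasGradientAt f (gradient f (x + t • v)) (x + t • v) :=
    (hdiff _).hasGradientAt
  have := (hg.hasFDerivAt.comp_hasDerivAt t hc)
  simpa [InnerProductSpace.toDual_apply_apply, Function.comp_def] using this

lemma convex_lower (f : E → ℝ) (hdiff : Differentiable ℝ f)
    (hconv : ConvexOn ℝ Set.univ f) (x y : E) :
    f x + ⟪gradient f x, y - x⟫ ≤ f y := by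
  set v := y - x with hv
  have hφ : ConvexOn ℝ Set.univ (fun t : ℝ => f (x + t • v)) := by
    have h1 := hconv.comp_affineMap (AffineMap.lineMap x y)
    have h2 : (fun t : ℝ => f (x + t • v)) = f ∘ (AffineMap.lineMap x y) := by
      funext t
      simp [AffineMap.lineMap_apply_module, hv]
      congr 1
      module
    rw [h2]
    simpa using h1
  have hd := curve_deriv f hdiff x v 0
  simp only [zero_smul, add_zero] at hd
  have := hφ.le_slope_of_hasDerivAt (mem_univ (0:ℝ)) (mem_univ (1:ℝ)) one_pos hd
  rw [slope_def_field] at this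
  simp only [div_one, sub_zero] at this
  have h1 : x + (1:ℝ) • v = y := by simp [hv]
  rw [h1] at this
  simp only [zero_smul, add_zero] at this
  linarith

lemma descent (f : E → ℝ) (L : ℝ) (hL : 0 < L) (hdiff : Differentiable ℝ f)
    (hlip : ∀ x y, ‖gradient f x - gradient f y‖ ≤ L * ‖x - y‖) (x y : E) :
    f y ≤ f x + ⟪gradient f x, y - x⟫ + L / 2 * ‖y - x‖ ^ 2 := by
  set v := y - x with hv
  set ψ : ℝ → ℝ := fun t => f (x + t • v) - t * ⟪gradient f x, v⟫ - L * t ^ 2 / 2 * ‖v‖ ^ 2 with hψ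
  have hder : ∀ t : ℝ, HasDerivAt ψ
      (⟪gradient f (x + t • v), v⟫ - ⟪gradient f x, v⟫ - L * t * ‖v‖ ^ 2) t := by
    intro t
    have h1 := curve_deriv f hdiff x v t
    have h2 : HasDerivAt (fun t : ℝ => t * ⟪gradient f x, v⟫) ⟪gradient f x, v⟫ t := by
      simpa using (hasDerivAt_id t).mul_const ⟪gradient f x, v⟫
    have h3 : HasDerivAt (fun t : ℝ => L * t ^ 2 / 2 * ‖v‖ ^ 2) (L * t * ‖v‖ ^ 2) t := by
      have : HasDerivAt (fun t : ℝ => t ^ 2) (2 * t) t := by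
        simpa using (hasDerivAt_pow 2 t)
      have := ((this.const_mul L).div_const 2).mul_const (‖v‖ ^ 2)
      exact this.congr_deriv (by ring)
    exact (h1.sub h2).sub h3
  have hmono : AntitoneOn ψ (Icc (0:ℝ) 1) := by
    apply antitoneOn_of_deriv_nonpos (convex_Icc 0 1)
    · exact fun t _ => ((hder t).differentiableAt.continuousAt).continuousWithinAt
    · intro t _
      exact (hder t).differentiableAt.differentiableWithinAt
    · intro t ht
      rw [interior_Icc] at ht
      rw [(hder t).deriv]
      have hb : ⟪gradient f (x + t • v) - gradient f x, v⟫ ≤ L * t * ‖v‖ ^ 2 := by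
        calc ⟪gradient f (x + t • v) - gradient f x, v⟫ ≤ ‖gradient f (x + t • v) - gradient f x‖ * ‖v‖ :=
              real_inner_le_norm _ _
          _ ≤ (L * ‖(x + t • v) - x‖) * ‖v‖ := by
              gcongr; exact hlip _ _
          _ = L * (|t| * ‖v‖) * ‖v‖ := by simp [norm_smul, abs_of_pos ht.1]
          _ = L * |t| * ‖v‖ ^ 2 := by ring
          _ = L * t * ‖v‖ ^ 2 := by rw [abs_of_pos ht.1]
      rw [inner_sub_left] at hb
      linarith
  have key := hmono (left_mem_Icc.mpr one_pos.le) (right_mem_Icc.mpr one_pos.le) one_pos.le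
  simp only [hψ] at key
  simp only [zero_smul, add_zero, one_smul, mul_zero, zero_mul, sub_zero, one_pow, mul_one,
    zero_pow, ne_eq, OfNat.ofNat_ne_zero, not_false_eq_true] at key
  have h1 : x + v = y := by simp [hv]
  rw [h1] at key
  have : L * 1 / 2 = L / 2 := by ring
  nlinarith [key]

lemma coco (f : E → ℝ) (L : ℝ) (hL : 0 < L) (hdiff : Differentiable ℝ f)
    (hconv : ConvexOn ℝ Set.univ f)
    (hlip : ∀ x y, ‖gradient f x - gradient f y‖ ≤ L * ‖x - y‖) (x y : E) :
    f x + ⟪gradient f x, y - x⟫ + 1 / (2 * L) * ‖gradient f y - gradient f x‖ ^ 2 ≤ f y := by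
  set w := gradient f y - gradient f x with hw
  set z := y - (1 / L) • w with hz
  have hd := descent f L hL hdiff hlip y z
  have hlow := convex_lower f hdiff hconv x z
  have e1 : z - y = -((1/L) • w) := by rw [hz]; abel
  have e2 : z - x = (y - x) - (1/L) • w := by rw [hz]; abel
  rw [e1] at hd
  rw [e2] at hlow
  rw [inner_neg_right, real_inner_smul_right, norm_neg, norm_smul] at hd
  rw [inner_sub_right, real_inner_smul_right] at hlow
  have e3 : ⟪gradient f y, w⟫ - ⟪gradient f x, w⟫ = ‖w‖ ^ 2 := by
    rw [← inner_sub_left, ← hw, real_inner_self_eq_norm_sq]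
  have e4 : ‖(1/L : ℝ)‖ = 1/L := by
    rw [Real.norm_eq_abs, abs_of_pos (by positivity)]
  rw [e4] at hd
  have hLne : L ≠ 0 := ne_of_gt hL
  have expand : L / 2 * (1 / L * ‖w‖) ^ 2 = 1 / (2 * L) * ‖w‖ ^ 2 := by
    field_simp
  rw [expand] at hd
  have e5 : 1/L * ⟪gradient f y, w⟫ - 1/L * ⟪gradient f x, w⟫ = 1/L * ‖w‖ ^ 2 := by
    rw [← mul_sub, e3]
  have e6 : 1/(2*L) * ‖w‖ ^ 2 + 1/(2*L) * ‖w‖ ^ 2 = 1/L * ‖w‖ ^ 2 := by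
    field_simp; ring
  linarith

lemma alg_mono (h a b c : ℝ) (hh0 : 0 < h) (hh1 : h ≤ 3/2) (ha : 0 ≤ a) (hb : 0 ≤ b)
    (hcs : c ^ 2 ≤ a * b) (hC1 : b ≤ (h - 1) * a + (2 - h) * c) : b ≤ a := by
  by_contra hab
  push_neg at hab
  have h1 : 0 < b - (h - 1) * a := by nlinarith
  have h2 : (0:ℝ) < 2 - h := by linarith
  have h3 : b - (h - 1) * a ≤ (2 - h) * c := by linarith
  have h4 : (b - (h - 1) * a) ^ 2 ≤ ((2 - h) * c) ^ 2 := by nlinarith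
  have h6 : (b - (h - 1) * a) ^ 2 ≤ (2 - h) ^ 2 * (a * b) := by nlinarith [sq_nonneg (2 - h)]
  have h7 : (b - a) * (b - (h - 1) ^ 2 * a) ≤ 0 := by nlinarith
  have h8 : 0 < b - (h - 1) ^ 2 * a := by nlinarith [mul_nonneg (mul_pos hh0 h2).le ha]
  nlinarith [mul_pos (by linarith : (0:ℝ) < b - a) h8]

lemma step (f : E → ℝ) (L hs : ℝ) (hL : 0 < L) (hh0 : 0 < hs) (hh1 : hs ≤ 3/2)
    (hdiff : Differentiable ℝ f) (hconv : ConvexOn ℝ Set.univ f)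
    (hlip : ∀ x y, ‖gradient f x - gradient f y‖ ≤ L * ‖x - y‖)
    (xi : E) :
    hs * ‖gradient f (xi - (hs / L) • gradient f xi)‖ ^ 2
        ≤ L * (f xi - f (xi - (hs / L) • gradient f xi)) ∧
      ‖gradient f (xi - (hs / L) • gradient f xi)‖ ^ 2 ≤ ‖gradient f xi‖ ^ 2 := by
  set x' := xi - (hs / L) • gradient f xi with hx'
  set g := gradient f xi with hg
  set g' := gradient f x' with hg'
  have I1 := coco f L hL hdiff hconv hlip xi x'
  have I2 := coco f L hL hdiff hconv hlip x' xi
  have d1 : x' - xi = -((hs / L) • g) := by rw [hx']; abel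
  have d2 : xi - x' = (hs / L) • g := by rw [hx']; abel
  rw [d1, inner_neg_right, real_inner_smul_right, real_inner_self_eq_norm_sq] at I1
  rw [d2, real_inner_smul_right] at I2
  set a := ‖g‖ ^ 2 with hA
  set b := ‖g'‖ ^ 2 with hB
  set c := ⟪g, g'⟫ with hC
  have nid : ‖g - g'‖ ^ 2 = a - 2 * c + b := by
    rw [hA, hB, hC, @norm_sub_sq_real]
  have nrev : ‖g' - g‖ = ‖g - g'‖ := norm_sub_rev _ _
  rw [nrev, nid] at I1
  rw [nid] at I2
  have hgc : ⟪g', g⟫ = c := by rw [hC, real_inner_comm]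
  rw [hgc] at I2
  have ha : 0 ≤ a := by positivity
  have hb : 0 ≤ b := by positivity
  have hcs : c ^ 2 ≤ a * b := by
    have := real_inner_mul_inner_self_le g g'
    rw [hA, hB, hC]
    nlinarith [this, real_inner_self_eq_norm_sq g, real_inner_self_eq_norm_sq g']
  -- multiply through by L
  have hLne : L ≠ 0 := ne_of_gt hL
  have e1 : L * f xi - hs * a + (a - 2*c + b)/2 ≤ L * f x' := by
    have h2 := mul_le_mul_of_nonneg_left I1 hL.le
    have r : L * (f xi + -(hs / L * a) + 1 / (2 * L) * (a - 2*c + b))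
        = L * f xi - hs * a + (a - 2*c + b)/2 := by field_simp; ring
    rw [r] at h2
    linarith
  have e2 : L * f x' + hs * c + (a - 2*c + b)/2 ≤ L * f xi := by
    have h2 := mul_le_mul_of_nonneg_left I2 hL.le
    have r : L * (f x' + hs / L * c + 1 / (2 * L) * (a - 2*c + b))
        = L * f x' + hs * c + (a - 2*c + b)/2 := by field_simp
    rw [r] at h2
    linarith
  have hC1 : b ≤ (hs - 1) * a + (2 - hs) * c := by linarith
  constructor
  · -- h*b ≤ L*(f xi - f x') : W = C1 + (3/2-hs)*n ≥ 0
    have hn : 0 ≤ a - 2*c + b := by rw [← nid]; positivity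
    nlinarith [mul_nonneg (by linarith : (0:ℝ) ≤ 3/2 - hs) hn]
  · exact alg_mono hs a b c hh0 hh1 ha hb hcs hC1

theorem stmt_16 {d : ℕ} (f : EuclideanSpace ℝ (Fin d) → ℝ) (L : ℝ) (hL : 0 < L)
    (hdiff : Differentiable ℝ f)
    (hconv : ConvexOn ℝ Set.univ f)
    (hlip : ∀ x y, ‖gradient f x - gradient f y‖ ≤ L * ‖x - y‖)
    (fstar : ℝ) (hbdd : ∀ y, fstar ≤ f y)
    (N : ℕ) (hN : 1 ≤ N)
    (h : ℕ → ℝ) (hh : ∀ i < N, h i ∈ Set.Ioc (0:ℝ) (3 / 2))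
    (x : ℕ → EuclideanSpace ℝ (Fin d))
    (hstep : ∀ i < N, x (i + 1) = x i - (h i / L) • gradient f (x i)) :
    ‖gradient f (x N)‖ ^ 2 ≤
      L * (f (x 0) - fstar) / (1 / 2 + ∑ i ∈ Finset.range N, h i) := by
  have hstep' : ∀ i < N,
      h i * ‖gradient f (x (i+1))‖ ^ 2 ≤ L * (f (x i) - f (x (i+1))) ∧
      ‖gradient f (x (i+1))‖ ^ 2 ≤ ‖gradient f (x i)‖ ^ 2 := by
    intro i hi
    have hs := step f L (h i) hL (hh i hi).1 (hh i hi).2 hdiff hconv hlip (x i)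
    rw [← hstep i hi] at hs
    exact hs
  -- tail monotonicity
  have tail : ∀ k, ∀ i, i + k = N → ‖gradient f (x N)‖ ^ 2 ≤ ‖gradient f (x i)‖ ^ 2 := by
    intro k
    induction k with
    | zero => intro i hik; simp at hik; rw [hik]
    | succ k ih =>
      intro i hik
      have hiN : i < N := by omega
      have h1 := ih (i + 1) (by omega)
      exact le_trans h1 (hstep' i hiN).2
  have tail' : ∀ i ≤ N, ‖gradient f (x N)‖ ^ 2 ≤ ‖gradient f (x i)‖ ^ 2 := by
    intro i hi; exact tail (N - i) i (by omega)
  -- summation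
  have sumineq : (∑ i ∈ Finset.range N, h i) * ‖gradient f (x N)‖ ^ 2
      ≤ L * (f (x 0) - f (x N)) := by
    have e1 : ∑ i ∈ Finset.range N, (f (x i) - f (x (i+1))) = f (x 0) - f (x N) :=
      Finset.sum_range_sub' (fun i => f (x i)) N
    calc (∑ i ∈ Finset.range N, h i) * ‖gradient f (x N)‖ ^ 2
        = ∑ i ∈ Finset.range N, h i * ‖gradient f (x N)‖ ^ 2 := by
          rw [Finset.sum_mul]
      _ ≤ ∑ i ∈ Finset.range N, L * (f (x i) - f (x (i+1))) := by
          apply Finset.sum_le_sum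
          intro i hi
          have hiN := Finset.mem_range.mp hi
          calc h i * ‖gradient f (x N)‖ ^ 2
              ≤ h i * ‖gradient f (x (i+1))‖ ^ 2 :=
                mul_le_mul_of_nonneg_left (tail' (i+1) (by omega)) (hh i hiN).1.le
            _ ≤ L * (f (x i) - f (x (i+1))) := (hstep' i hiN).1
      _ = L * (f (x 0) - f (x N)) := by rw [← Finset.mul_sum, e1]
  -- last point bound
  have last : ‖gradient f (x N)‖ ^ 2 ≤ 2 * L * (f (x N) - fstar) := by
    set g := gradient f (x N) with hg
    have hd := descent f L hL hdiff hlip (x N) (x N - (1/L) • g)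
    have d1 : (x N - (1/L) • g) - x N = -((1/L) • g) := by abel
    rw [d1, inner_neg_right, real_inner_smul_right, real_inner_self_eq_norm_sq, norm_neg,
      norm_smul] at hd
    have e4 : ‖(1/L : ℝ)‖ = 1/L := by rw [Real.norm_eq_abs, abs_of_pos (by positivity)]
    rw [e4] at hd
    have hLne : L ≠ 0 := ne_of_gt hL
    have expand : L / 2 * (1 / L * ‖g‖) ^ 2 = 1 / (2 * L) * ‖g‖ ^ 2 := by field_simp
    rw [expand] at hd
    have hb := hbdd (x N - (1/L) • g)
    have e5 : 1 / L * ‖g‖ ^ 2 - 1 / (2 * L) * ‖g‖ ^ 2 = 1 / (2 * L) * ‖g‖ ^ 2 := by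
      field_simp; ring
    have e6 : f (x N) - fstar ≥ 1 / (2 * L) * ‖g‖ ^ 2 := by linarith
    have e7 := mul_le_mul_of_nonneg_left e6 (by positivity : (0:ℝ) ≤ 2 * L)
    have e8 : 2 * L * (1 / (2 * L) * ‖g‖ ^ 2) = ‖g‖ ^ 2 := by field_simp
    rw [e8] at e7
    linarith
  have hSpos : 0 < ∑ i ∈ Finset.range N, h i :=
    Finset.sum_pos (fun i hi => (hh i (Finset.mem_range.mp hi)).1)
      ⟨0, Finset.mem_range.mpr hN⟩
  rw [le_div_iff₀ (by positivity)]
  nlinarith [sumineq, last]
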